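/- Suppose H0 holds. Let (x_k) be a sequence in int(dom φ) that is D-Fejér monotone with respect to C, i.e., for every x ∈ C and every k ∈ ℕ, D_φ(x, x_{k+1}) ≤ D_φ(x, x_k). If D_C(x_k) → 0 and condition SC holds, then (x_k) converges to some point of C ∩ int(dom φ). -/

import Mathlib

open Set Filter Topology MeasureTheory ProbabilityTheory
open scoped InnerProductSpace ENNReal Classical

noncomputable section

/-- A Legendre function on a Euclidean space `X`, represented by its (finite) values `f` on its
effective domain `dom`, together with the data of its Fenchel conjugate (`conj` on `domConj`)
and the gradients of both. -/
structure LegendreFn (X : Type*) [NormedAddCommGroup X] [InnerProductSpace ℝ X]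
    [FiniteDimensional ℝ X] where
  /-- the values of `φ` on its domain -/
  f : X → ℝ
  /-- the effective domain of `φ` (`φ = +∞` outside of it) -/
  dom : Set X
  /-- the values of the Fenchel conjugate `φ*` on its domain -/
  conj : X → ℝ
  /-- the effective domain of `φ*` -/
  domConj : Set X
  /-- the gradient of `φ` (meaningful on `interior dom`) -/
  grad : X → X
  /-- the gradient of `φ*` (meaningful on `interior domConj`) -/
  gradConj : X → X
  dom_nonempty : dom.Nonempty
  int_dom_nonempty : (interior dom).Nonempty
  dom_convex : Convex ℝ dom
  convexOn : ConvexOn ℝ dom f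
  /-- `φ` is closed: the epigraph of the extended function is closed -/
  closedEpi : IsClosed {p : X × ℝ | p.1 ∈ dom ∧ f p.1 ≤ p.2}
  /-- essential smoothness, part 1: differentiability on the interior of the domain -/
  hasGrad : ∀ x ∈ interior dom, HasGradientAt f (grad x) x
  /-- essential smoothness, part 2: the gradient blows up at the boundary -/
  grad_blowup : ∀ (u : ℕ → X) (x : X), (∀ n, u n ∈ interior dom) → x ∈ frontier dom →
      Tendsto u atTop (nhds x) → Tendsto (fun n => ‖grad (u n)‖) atTop atTop
  /-- `domConj` is the set where the conjugate supremum is finite -/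
  domConj_spec : ∀ y : X, y ∈ domConj ↔ BddAbove ((fun x => ⟪x, y⟫_ℝ - f x) '' dom)
  /-- `conj` is the Fenchel conjugate of `φ` -/
  conj_spec : ∀ y ∈ domConj, IsLUB ((fun x => ⟪x, y⟫_ℝ - f x) '' dom) (conj y)
  int_domConj_nonempty : (interior domConj).Nonempty
  /-- essential strict convexity: `φ` is strictly convex on every convex subset of `dom ∂φ` -/
  strict : ∀ s : Set X,
      s ⊆ {x ∈ dom | ∃ v : X, ∀ z ∈ dom, f x + ⟪v, z - x⟫_ℝ ≤ f z} →
      Convex ℝ s → StrictConvexOn ℝ s f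
  hasGradConj : ∀ y ∈ interior domConj, HasGradientAt conj (gradConj y) y
  /-- Bregman projections onto closed convex sets meeting `interior dom` exist
  (Bauschke–Borwein). -/
  proj_exists : ∀ S : Set X, IsClosed S → Convex ℝ S → (S ∩ interior dom).Nonempty →
      ∀ x ∈ interior dom, ∃ p ∈ S ∩ interior dom, ∀ z ∈ S ∩ dom,
        f p - ⟪p, grad x⟫_ℝ ≤ f z - ⟪z, grad x⟫_ℝ

namespace LegendreFn

variable {X : Type*} [NormedAddCommGroup X] [InnerProductSpace ℝ X] [FiniteDimensional ℝ X]

/-- The Bregman distance `D_φ(x, y)`; the formula is meaningful for `x ∈ dom φ` and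
`y ∈ int (dom φ)`. -/
def breg (L : LegendreFn X) (x y : X) : ℝ :=
  L.f x - L.f y - ⟪x - y, L.grad y⟫_ℝ

/-- The Bregman distance from the point `y` to the set `S`: `D_S(y) = inf_{z ∈ S} D_φ(z, y)`. -/
def distTo (L : LegendreFn X) (S : Set X) (y : X) : ℝ :=
  sInf ((fun z => L.breg z y) '' (S ∩ L.dom))

/-- `p` is the Bregman projection of `x` onto `S`. -/
def IsBregProj (L : LegendreFn X) (S : Set X) (x p : X) : Prop :=
  p ∈ S ∧ p ∈ interior L.dom ∧ ∀ z ∈ S ∩ L.dom, L.breg p x ≤ L.breg z x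

/-- The Bregman projection of `x` onto `S` (as a function; well defined whenever the Bregman
projection exists, since it is then unique). -/
def proj (L : LegendreFn X) (S : Set X) (x : X) : X :=
  @Classical.epsilon X ⟨0⟩ (L.IsBregProj S x)

end LegendreFn

/-- Condition SC (sequential consistency). -/
def SCcond {X : Type*} [NormedAddCommGroup X] [InnerProductSpace ℝ X] [FiniteDimensional ℝ X]
    (L : LegendreFn X) : Prop :=
  ∀ z y : ℕ → X, (∀ n, z n ∈ interior L.dom) → (∀ n, y n ∈ interior L.dom) →
    Bornology.IsBounded (Set.range z) → Bornology.IsBounded (Set.range y) →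
    Tendsto (fun n => L.breg (z n) (y n)) atTop (nhds 0) →
    Tendsto (fun n => z n - y n) atTop (nhds 0)

/-- Assumption H0: `C ≠ X`, `dom φ*` is open and `int (dom φ) ∩ C ≠ ∅`
(`φ` being Legendre is part of the `LegendreFn` structure). -/
def H0 {X : Type*} [NormedAddCommGroup X] [InnerProductSpace ℝ X] [FiniteDimensional ℝ X]
    (L : LegendreFn X) (C : Set X) : Prop :=
  C ≠ Set.univ ∧ IsOpen L.domConj ∧ (interior L.dom ∩ C).Nonempty

/-- `G` is the Moore–Penrose pseudoinverse of `T`. -/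
def IsMPInv {E F : Type*} [NormedAddCommGroup E] [InnerProductSpace ℝ E] [FiniteDimensional ℝ E]
    [NormedAddCommGroup F] [InnerProductSpace ℝ F] [FiniteDimensional ℝ F]
    (T : E →L[ℝ] F) (G : F →L[ℝ] E) : Prop :=
  T ∘L G ∘L T = T ∧ G ∘L T ∘L G = G ∧
    ContinuousLinearMap.adjoint (T ∘L G) = T ∘L G ∧
    ContinuousLinearMap.adjoint (G ∘L T) = G ∘L T

/-- The orthogonal projection onto a subspace, as a map `X →L[ℝ] X`. -/
def projL {X : Type*} [NormedAddCommGroup X] [InnerProductSpace ℝ X] [FiniteDimensional ℝ X]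
    (K : Submodule ℝ X) : X →L[ℝ] X :=
  K.subtypeL.comp (K.orthogonalProjection)

/-- The set `K(x)` of points having the same Bregman projection onto `C` as `x` and not larger
Bregman distance to `C`. -/
def Kset {X : Type*} [NormedAddCommGroup X] [InnerProductSpace ℝ X] [FiniteDimensional ℝ X]
    (L : LegendreFn X) (C : Set X) (x : X) : Set X :=
  {z | z ∈ interior L.dom ∧ L.proj C z = L.proj C x ∧ L.distTo C z ≤ L.distTo C x}

section Affine

variable {X Y : Type*} [NormedAddCommGroup X] [InnerProductSpace ℝ X] [FiniteDimensional ℝ X]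
  [NormedAddCommGroup Y] [InnerProductSpace ℝ Y] [FiniteDimensional ℝ Y]
  {I : Type*} {Yf : I → Type*} [∀ i, NormedAddCommGroup (Yf i)]
  [∀ i, InnerProductSpace ℝ (Yf i)] [∀ i, FiniteDimensional ℝ (Yf i)]

/-- Assumption H2₁: `φ*` is twice differentiable (with second derivative `hess`), and for all
`x ∈ int (dom φ) ∩ C`, `A ∘ ∇²φ*(∇φ(x)) ≠ 0` and
`sup_i ‖Aᵢ* (Aᵢ ∇²φ*(∇φ(x)) Aᵢ*)† Aᵢ‖ < ∞`. -/
def H21 (L : LegendreFn X) (A : ∀ i, X →L[ℝ] Yf i) (AY : X →L[ℝ] Y) (C : Set X)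
    (hess : X → X →L[ℝ] X) : Prop :=
  (∀ y ∈ interior L.domConj, HasFDerivAt L.gradConj (hess y) y) ∧
  ∀ x ∈ interior L.dom ∩ C,
    AY ∘L hess (L.grad x) ≠ 0 ∧
    ∃ M : ℝ, ∀ (i : I) (G : Yf i →L[ℝ] Yf i),
      IsMPInv (A i ∘L hess (L.grad x) ∘L ContinuousLinearMap.adjoint (A i)) G →
      ‖ContinuousLinearMap.adjoint (A i) ∘L G ∘L A i‖ ≤ M

/-- The orthogonal projection `Q_i(x)` onto `range (H(x) Aᵢ*)`, where `H(x)` (here `Hrt x`) is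
the positive square root of `∇²φ*(∇φ(x))`. -/
def Qproj (A : ∀ i, X →L[ℝ] Yf i) (Hrt : X → X →L[ℝ] X) (i : I) (x : X) : X →L[ℝ] X :=
  projL (LinearMap.range ((Hrt x ∘L ContinuousLinearMap.adjoint (A i) : Yf i →L[ℝ] X) : Yf i →ₗ[ℝ] X))

/-- The subspace `V(x) = range (H(x) A*)`. -/
def Vsub (AY : X →L[ℝ] Y) (Hrt : X → X →L[ℝ] X) (x : X) : Submodule ℝ X :=
  LinearMap.range ((Hrt x ∘L ContinuousLinearMap.adjoint AY : Y →L[ℝ] X) : Y →ₗ[ℝ] X)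

/-- `γ_𝒞(x) = inf_{v ∈ V(x) \ {0}} sup_i ‖Q_i(x) v‖² / ‖v‖²`. -/
def gammaC (A : ∀ i, X →L[ℝ] Yf i) (AY : X →L[ℝ] Y) (Hrt : X → X →L[ℝ] X) (x : X) : ℝ :=
  ⨅ v : {v : X // v ∈ Vsub AY Hrt x ∧ v ≠ 0},
    ⨆ i : I, ‖Qproj A Hrt i x v.1‖ ^ 2 / ‖v.1‖ ^ 2

/-- `σ_𝒞(x)`, the (deterministic, greedy) contraction factor. -/
def sigmaC (L : LegendreFn X) (Cs : I → Set X) (C : Set X) (γ : X → ℝ) (x : X) : ℝ :=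
  if x ∈ C then 1 - γ x
  else ⨆ z : ↥(Kset L C x \ C), ⨅ i : I, L.distTo C (L.proj (Cs i) z) / L.distTo C z

end Affine

section Stochastic

variable {X Y : Type*} [NormedAddCommGroup X] [InnerProductSpace ℝ X] [FiniteDimensional ℝ X]
  [NormedAddCommGroup Y] [InnerProductSpace ℝ Y] [FiniteDimensional ℝ Y]
  {I : Type*} {Yf : I → Type*} [∀ i, NormedAddCommGroup (Yf i)]
  [∀ i, InnerProductSpace ℝ (Yf i)] [∀ i, FiniteDimensional ℝ (Yf i)]
  {Ω : Type*} [MeasurableSpace Ω]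

/-- Assumption H2₂ (stochastic version of H2₁, with an essential supremum). -/
def H22 (L : LegendreFn X) (A : ∀ i, X →L[ℝ] Yf i) (AY : X →L[ℝ] Y) (C : Set X)
    (hess : X → X →L[ℝ] X) (P : Measure Ω) (ξ : Ω → I) : Prop :=
  (∀ y ∈ interior L.domConj, HasFDerivAt L.gradConj (hess y) y) ∧
  ∀ x ∈ interior L.dom ∩ C,
    AY ∘L hess (L.grad x) ≠ 0 ∧
    ∃ M : ℝ, ∀ᵐ ω ∂P, ∀ G : Yf (ξ ω) →L[ℝ] Yf (ξ ω),
      IsMPInv (A (ξ ω) ∘L hess (L.grad x) ∘L ContinuousLinearMap.adjoint (A (ξ ω))) G →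
      ‖ContinuousLinearMap.adjoint (A (ξ ω)) ∘L G ∘L A (ξ ω)‖ ≤ M

/-- `Q̄(x) = E[Q_ξ(x)]` (Bochner expectation). -/
def Qbar (A : ∀ i, X →L[ℝ] Yf i) (Hrt : X → X →L[ℝ] X) (P : Measure Ω) (ξ : Ω → I) (x : X) :
    X →L[ℝ] X :=
  ∫ ω, Qproj A Hrt (ξ ω) x ∂P

/-- `γ_{𝒞,μ}(x) = inf_{v ∈ V(x) \ {0}} ⟪Q̄(x) v, v⟫ / ‖v‖²`. -/
def gammaCmu (A : ∀ i, X →L[ℝ] Yf i) (AY : X →L[ℝ] Y) (Hrt : X → X →L[ℝ] X)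
    (P : Measure Ω) (ξ : Ω → I) (x : X) : ℝ :=
  ⨅ v : {v : X // v ∈ Vsub AY Hrt x ∧ v ≠ 0},
    ⟪Qbar A Hrt P ξ x v.1, v.1⟫_ℝ / ‖v.1‖ ^ 2

/-- `σ_{𝒞,μ}(x)`, the stochastic contraction factor. -/
def sigmaCmu (L : LegendreFn X) (Cs : I → Set X) (C : Set X) (γ : X → ℝ)
    (P : Measure Ω) (ξ : Ω → I) (x : X) : ℝ :=
  if x ∈ C then 1 - γ x
  else ⨆ z : ↥(Kset L C x \ C),
    (∫ ω, L.distTo C (L.proj (Cs (ξ ω)) z) ∂P) / L.distTo C z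

/-- `D̄_C(x) = E[D_{C_ξ}(x)]`. -/
def DbarFn (L : LegendreFn X) (Cs : I → Set X) (P : Measure Ω) (ξ : Ω → I) (x : X) : ℝ :=
  ∫ ω, L.distTo (Cs (ξ ω)) x ∂P

end Stochastic

section AuxStmt2

variable {X : Type*} [NormedAddCommGroup X] [InnerProductSpace ℝ X] [FiniteDimensional ℝ X]

/-- Gradient inequality for a convex function at a point of differentiability. -/
lemma aux_grad_ineq {s : Set X} {f : X → ℝ} (hf : ConvexOn ℝ s f) {y g : X}
    (hy : y ∈ s) (hg : HasGradientAt f g y) {z : X} (hz : z ∈ s) :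
    ⟪g, z - y⟫_ℝ ≤ f z - f y := by
  have hc : HasDerivAt (fun t : ℝ => y + t • (z - y)) (z - y) 0 := by
    simpa using ((hasDerivAt_id (0 : ℝ)).smul_const (z - y)).const_add y
  have hcomp : HasDerivAt (fun t : ℝ => f (y + t • (z - y))) ⟪g, z - y⟫_ℝ 0 := by
    have hg' : HasFDerivAt f (InnerProductSpace.toDual ℝ X g) (y + (0 : ℝ) • (z - y)) := by
      simpa using hasGradientAt_iff_hasFDerivAt.1 hg
    have h1 := hg'.comp_hasDerivAt 0 hc
    exact h1
  have hslope : Tendsto (slope (fun t : ℝ => f (y + t • (z - y))) 0) (𝓝[>] 0)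
      (𝓝 ⟪g, z - y⟫_ℝ) :=
    (hasDerivAt_iff_tendsto_slope.1 hcomp).mono_left
      (nhdsWithin_mono 0 (fun t ht => ne_of_gt ht))
  refine le_of_tendsto hslope ?_
  filter_upwards [Ioc_mem_nhdsGT_of_mem (by constructor <;> norm_num : (0 : ℝ) ∈ Ico (0:ℝ) 1)]
    with t ht
  have ht0 : 0 < t := ht.1
  have ht1 : t ≤ 1 := ht.2
  have hcomb : y + t • (z - y) = (1 - t) • y + t • z := by
    rw [sub_smul, smul_sub, one_smul]; abel
  have hval : f (y + t • (z - y)) ≤ (1 - t) * f y + t * f z := by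
    rw [hcomb]
    exact hf.2 hy hz (by linarith) ht0.le (by ring)
  rw [slope_def_field]
  simp only [zero_smul, add_zero, sub_zero]
  rw [div_le_iff₀ ht0]
  nlinarith [hval]

lemma aux_le_conj (L : LegendreFn X) {v x : X} (hv : v ∈ L.domConj) (hx : x ∈ L.dom) :
    ⟪x, v⟫_ℝ - L.f x ≤ L.conj v :=
  (L.conj_spec v hv).1 ⟨x, hx, rfl⟩

/-- Fenchel equality at a gradient point. -/
lemma aux_fenchel (L : LegendreFn X) {y : X} (hy : y ∈ interior L.dom) :
    L.grad y ∈ L.domConj ∧ L.conj (L.grad y) = ⟪y, L.grad y⟫_ℝ - L.f y := by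
  have hub : ∀ x ∈ L.dom, ⟪x, L.grad y⟫_ℝ - L.f x ≤ ⟪y, L.grad y⟫_ℝ - L.f y := by
    intro x hx
    have h1 := aux_grad_ineq L.convexOn (interior_subset hy) (L.hasGrad y hy) hx
    have h2 : ⟪x - y, L.grad y⟫_ℝ ≤ L.f x - L.f y := by rwa [real_inner_comm]
    rw [inner_sub_left] at h2; linarith
  have hbdd : BddAbove ((fun x => ⟪x, L.grad y⟫_ℝ - L.f x) '' L.dom) := by
    refine ⟨⟪y, L.grad y⟫_ℝ - L.f y, ?_⟩
    rintro _ ⟨x, hx, rfl⟩; exact hub x hx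
  have hmem : L.grad y ∈ L.domConj := (L.domConj_spec _).2 hbdd
  refine ⟨hmem, ?_⟩
  have hlub : IsLUB ((fun x => ⟪x, L.grad y⟫_ℝ - L.f x) '' L.dom)
      (⟪y, L.grad y⟫_ℝ - L.f y) := by
    constructor
    · rintro _ ⟨x, hx, rfl⟩; exact hub x hx
    · intro b hb; exact hb ⟨y, interior_subset hy, rfl⟩
  exact (L.conj_spec _ hmem).unique hlub

lemma aux_breg_eq (L : LegendreFn X) {y : X} (hy : y ∈ interior L.dom) (w : X) :
    L.breg w y = L.f w + L.conj (L.grad y) - ⟪w, L.grad y⟫_ℝ := by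
  rw [(aux_fenchel L hy).2]
  unfold LegendreFn.breg
  rw [inner_sub_left]; ring

lemma aux_breg_nonneg (L : LegendreFn X) {y w : X} (hy : y ∈ interior L.dom)
    (hw : w ∈ L.dom) : 0 ≤ L.breg w y := by
  have h1 := aux_grad_ineq L.convexOn (interior_subset hy) (L.hasGrad y hy) hw
  have h2 : ⟪w - y, L.grad y⟫_ℝ ≤ L.f w - L.f y := by rwa [real_inner_comm]
  unfold LegendreFn.breg; linarith

lemma aux_conj_combo (L : LegendreFn X) {y1 y2 : X} (h1 : y1 ∈ L.domConj)
    (h2 : y2 ∈ L.domConj) {a b : ℝ} (ha : 0 ≤ a) (hb : 0 ≤ b) (hab : a + b = 1) :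
    a • y1 + b • y2 ∈ L.domConj ∧
      L.conj (a • y1 + b • y2) ≤ a * L.conj y1 + b * L.conj y2 := by
  have key : ∀ x ∈ L.dom, ⟪x, a • y1 + b • y2⟫_ℝ - L.f x ≤ a * L.conj y1 + b * L.conj y2 := by
    intro x hx
    have e1 : ⟪x, y1⟫_ℝ - L.f x ≤ L.conj y1 := aux_le_conj L h1 hx
    have e2 : ⟪x, y2⟫_ℝ - L.f x ≤ L.conj y2 := aux_le_conj L h2 hx
    have : ⟪x, a • y1 + b • y2⟫_ℝ = a * ⟪x, y1⟫_ℝ + b * ⟪x, y2⟫_ℝ := by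
      rw [inner_add_right, real_inner_smul_right, real_inner_smul_right]
    rw [this]
    have hfx : a * L.f x + b * L.f x = L.f x := by rw [← add_mul, hab, one_mul]
    linarith [mul_le_mul_of_nonneg_left e1 ha, mul_le_mul_of_nonneg_left e2 hb, hfx]
  have hbdd : BddAbove ((fun x => ⟪x, a • y1 + b • y2⟫_ℝ - L.f x) '' L.dom) := by
    refine ⟨a * L.conj y1 + b * L.conj y2, ?_⟩
    rintro _ ⟨x, hx, rfl⟩; exact key x hx
  have hmem := (L.domConj_spec _).2 hbdd
  refine ⟨hmem, (L.conj_spec _ hmem).2 ?_⟩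
  rintro _ ⟨x, hx, rfl⟩; exact key x hx

lemma aux_convexOn_conj (L : LegendreFn X) : ConvexOn ℝ L.domConj L.conj :=
  ⟨fun _ h1 _ h2 _ _ ha hb hab => (aux_conj_combo L h1 h2 ha hb hab).1,
   fun _ h1 _ h2 _ _ ha hb hab => (aux_conj_combo L h1 h2 ha hb hab).2⟩

/-- Uniform primal coercivity over a compact subset of `domConj`. -/
lemma aux_coercive_f (L : LegendreFn X) (hopen : IsOpen L.domConj) {S : Set X}
    (hS : IsCompact S) (hSsub : S ⊆ L.domConj) :
    ∃ δ > 0, ∃ K : ℝ, ∀ u ∈ S, ∀ w ∈ L.dom, δ * ‖w‖ - K ≤ L.f w - ⟪w, u⟫_ℝ := by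
  obtain ⟨δ, hδ, hth⟩ := hS.exists_cthickening_subset_open hopen hSsub
  have hcomp : IsCompact (Metric.cthickening δ S) := hS.cthickening
  have hcont : ContinuousOn L.conj (Metric.cthickening δ S) := by
    refine ContinuousOn.mono ?_ hth
    have := (aux_convexOn_conj L).continuousOn_interior
    rwa [hopen.interior_eq] at this
  obtain ⟨K, hK⟩ := hcomp.exists_bound_of_continuousOn hcont
  refine ⟨δ, hδ, K, ?_⟩
  intro u hu w hw
  by_cases hw0 : w = 0
  · subst hw0
    have huth : u ∈ Metric.cthickening δ S := Metric.self_subset_cthickening S hu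
    have h1 : ⟪(0 : X), u⟫_ℝ - L.f 0 ≤ L.conj u := aux_le_conj L (hth huth) hw
    have h2 : L.conj u ≤ K := le_trans (le_abs_self _) (hK u huth)
    simp only [inner_zero_left] at h1 ⊢
    simp only [norm_zero, mul_zero]
    linarith
  · set v := u + δ • ‖w‖⁻¹ • w with hv
    have hwpos : 0 < ‖w‖ := norm_pos_iff.2 hw0
    have hvmem : v ∈ Metric.cthickening δ S := by
      refine Metric.mem_cthickening_of_dist_le v u δ S hu ?_
      have h4 : dist v u = ‖δ • ‖w‖⁻¹ • w‖ := by
        rw [dist_eq_norm]; congr 1; rw [hv]; abel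
      have h5 : ‖δ • ‖w‖⁻¹ • w‖ = δ := by
        rw [norm_smul, norm_smul, Real.norm_eq_abs, Real.norm_eq_abs, abs_of_pos hδ,
          abs_of_pos (inv_pos.2 hwpos), inv_mul_cancel₀ hwpos.ne', mul_one]
      rw [h4, h5]
    have h1 : ⟪w, v⟫_ℝ - L.f w ≤ L.conj v := aux_le_conj L (hth hvmem) hw
    have h2 : L.conj v ≤ K := le_trans (le_abs_self _) (hK v hvmem)
    have h3 : ⟪w, v⟫_ℝ = ⟪w, u⟫_ℝ + δ * ‖w‖ := by
      rw [hv, inner_add_right, real_inner_smul_right, real_inner_smul_right,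
        real_inner_self_eq_norm_sq]
      field_simp
    rw [h3] at h1
    linarith

/-- Dual coercivity at an interior point of `dom`. -/
lemma aux_coercive_conj (L : LegendreFn X) {z : X} (hz : z ∈ interior L.dom) :
    ∃ ε > 0, ∃ K : ℝ, ∀ u ∈ L.domConj, ε * ‖u‖ - K ≤ L.conj u - ⟪z, u⟫_ℝ := by
  obtain ⟨ε', hε', hball⟩ := Metric.isOpen_iff.1 isOpen_interior z hz
  set ε := ε' / 2 with hε
  have hεpos : 0 < ε := by positivity
  have hcb : Metric.closedBall z ε ⊆ interior L.dom := by
    refine subset_trans ?_ hball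
    intro w hw
    have : dist w z ≤ ε := hw
    have : dist w z < ε' := lt_of_le_of_lt this (by rw [hε]; linarith)
    exact this
  have hcont : ContinuousOn L.f (Metric.closedBall z ε) :=
    L.convexOn.continuousOn_interior.mono hcb
  obtain ⟨K, hK⟩ := (isCompact_closedBall z ε).exists_bound_of_continuousOn hcont
  refine ⟨ε, hεpos, K, ?_⟩
  intro u hu
  by_cases hu0 : u = 0
  · subst hu0
    have hzmem : z ∈ Metric.closedBall z ε := Metric.mem_closedBall_self hεpos.le
    have h1 : ⟪z, (0:X)⟫_ℝ - L.f z ≤ L.conj 0 :=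
      aux_le_conj L hu (interior_subset hz)
    have h2 : L.f z ≤ K := le_trans (le_abs_self _) (hK z hzmem)
    simp only [inner_zero_right] at h1 ⊢
    simp only [norm_zero, mul_zero]
    linarith
  · set x := z + ε • ‖u‖⁻¹ • u with hx
    have hupos : 0 < ‖u‖ := norm_pos_iff.2 hu0
    have hxmem : x ∈ Metric.closedBall z ε := by
      rw [Metric.mem_closedBall]
      have h4 : dist x z = ‖ε • ‖u‖⁻¹ • u‖ := by
        rw [dist_eq_norm]; congr 1; rw [hx]; abel
      have h5 : ‖ε • ‖u‖⁻¹ • u‖ = ε := by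
        rw [norm_smul, norm_smul, Real.norm_eq_abs, Real.norm_eq_abs, abs_of_pos hεpos,
          abs_of_pos (inv_pos.2 hupos), inv_mul_cancel₀ hupos.ne', mul_one]
      rw [h4, h5]
    have h1 : ⟪x, u⟫_ℝ - L.f x ≤ L.conj u :=
      aux_le_conj L hu (interior_subset (hcb hxmem))
    have h2 : L.f x ≤ K := le_trans (le_abs_self _) (hK x hxmem)
    have h3 : ⟪x, u⟫_ℝ = ⟪z, u⟫_ℝ + ε * ‖u‖ := by
      rw [hx, inner_add_left, real_inner_smul_left, real_inner_smul_left,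
        real_inner_self_eq_norm_sq]
      field_simp
    rw [h3] at h1
    linarith

end AuxStmt2

/-- A `D`-Fejér monotone sequence with `D_C(x_k) → 0` converges, under
condition SC, to a point of `C ∩ int (dom φ)`. -/
theorem stmt_2 {X : Type*} [NormedAddCommGroup X] [InnerProductSpace ℝ X]
    [FiniteDimensional ℝ X]
    (L : LegendreFn X) (C : Set X)
    (hCne : C.Nonempty) (hCcl : IsClosed C) (hCcv : Convex ℝ C)
    (hH0 : H0 L C)
    (x : ℕ → X) (hx : ∀ k, x k ∈ interior L.dom)
    (hfejer : ∀ z ∈ C, ∀ k, L.breg z (x (k + 1)) ≤ L.breg z (x k))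
    (hD : Tendsto (fun k => L.distTo C (x k)) atTop (𝓝 0))
    (hSC : SCcond L) :
    ∃ p ∈ C ∩ interior L.dom, Tendsto x atTop (𝓝 p) := by
  obtain ⟨-, hopen, z, hzint, hzC⟩ := hH0
  have hzdom : z ∈ L.dom := interior_subset hzint
  -- iterated Fejér monotonicity
  have hFej : ∀ w ∈ C, ∀ k j : ℕ, k ≤ j → L.breg w (x j) ≤ L.breg w (x k) := by
    intro w hw k j hkj
    induction j, hkj using Nat.le_induction with
    | base => exact le_refl _
    | succ n hn ih => exact le_trans (hfejer w hw n) ih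
  have hfen : ∀ k, L.grad (x k) ∈ L.domConj ∧
      L.conj (L.grad (x k)) = ⟪x k, L.grad (x k)⟫_ℝ - L.f (x k) := fun k => aux_fenchel L (hx k)
  set M₀ := L.breg z (x 0) with hM₀
  have hMz : ∀ k, L.breg z (x k) ≤ M₀ := fun k => hFej z hzC 0 k (Nat.zero_le k)
  have hbregz : ∀ k, L.conj (L.grad (x k)) - ⟪z, L.grad (x k)⟫_ℝ ≤ M₀ - L.f z := by
    intro k
    have h1 := aux_breg_eq L (hx k) z
    have h2 := hMz k
    rw [h1] at h2
    linarith
  -- the gradients are bounded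
  obtain ⟨ε, hε, K1, hK1⟩ := aux_coercive_conj L hzint
  set R := (M₀ - L.f z + K1) / ε with hR
  have huR : ∀ k, ‖L.grad (x k)‖ ≤ R := by
    intro k
    have h1 := hK1 (L.grad (x k)) (hfen k).1
    have h2 := hbregz k
    rw [hR, le_div_iff₀ hε]
    nlinarith
  -- the closure of the set of gradients is a compact subset of domConj
  set S := closure (range fun k => L.grad (x k)) with hS
  have hSsubB : S ⊆ Metric.closedBall 0 R := by
    apply closure_minimal _ Metric.isClosed_closedBall
    rintro _ ⟨k, rfl⟩
    exact mem_closedBall_zero_iff.2 (huR k)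
  have hScomp : IsCompact S := (isCompact_closedBall (0 : X) R).of_isClosed_subset
    isClosed_closure hSsubB
  have hSsub : S ⊆ L.domConj := by
    intro v hv
    by_contra hvn
    apply hvn
    apply (L.domConj_spec v).2
    refine ⟨M₀ - L.f z + ⟪z, v⟫_ℝ, ?_⟩
    rintro _ ⟨x0, hx0, rfl⟩
    obtain ⟨w, hwmem, hwlim⟩ := mem_closure_iff_seq_limit.1 hv
    have key : ∀ m : ℕ, ⟪x0, w m⟫_ℝ - L.f x0 ≤ M₀ - L.f z + ⟪z, w m⟫_ℝ := by
      intro m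
      obtain ⟨k, hk⟩ := hwmem m
      have h1 : ⟪x0, w m⟫_ℝ - L.f x0 ≤ L.conj (w m) :=
        aux_le_conj L (hk ▸ (hfen k).1) hx0
      have h2 := hbregz k
      rw [show L.grad (x k) = w m from hk] at h2
      linarith
    have hlimL : Tendsto (fun m => ⟪x0, w m⟫_ℝ - L.f x0) atTop
        (𝓝 (⟪x0, v⟫_ℝ - L.f x0)) := by
      have hcont : Continuous fun y : X => ⟪x0, y⟫_ℝ := continuous_const.inner continuous_id
      exact ((hcont.tendsto v).comp hwlim).sub_const _
    have hlimR : Tendsto (fun m => M₀ - L.f z + ⟪z, w m⟫_ℝ) atTop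
        (𝓝 (M₀ - L.f z + ⟪z, v⟫_ℝ)) := by
      have hcont : Continuous fun y : X => ⟪z, y⟫_ℝ := continuous_const.inner continuous_id
      exact ((hcont.tendsto v).comp hwlim).const_add _
    exact le_of_tendsto_of_tendsto' hlimL hlimR key
  obtain ⟨δ, hδ, K2, hK2⟩ := aux_coercive_f L hopen hScomp hSsub
  have huS : ∀ k, L.grad (x k) ∈ S := fun k => subset_closure ⟨k, rfl⟩
  -- lower bound for conj on the gradients
  have hconjlb : ∀ k, -(‖z‖ * R + L.f z) ≤ L.conj (L.grad (x k)) := by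
    intro k
    have h1 : ⟪z, L.grad (x k)⟫_ℝ - L.f z ≤ L.conj (L.grad (x k)) :=
      aux_le_conj L (hfen k).1 hzdom
    have h2 := abs_real_inner_le_norm z (L.grad (x k))
    have h3 := neg_abs_le ⟪z, L.grad (x k)⟫_ℝ
    have h4 := huR k
    nlinarith [norm_nonneg z]
  -- the sequence x is bounded
  have hxB : ∀ k, ‖x k‖ ≤ (K2 + ‖z‖ * R + L.f z) / δ := by
    intro k
    have h1 := hK2 (L.grad (x k)) (huS k) (x k) (interior_subset (hx k))
    have h2 := (hfen k).2
    have h3 := hconjlb k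
    rw [le_div_iff₀ hδ]
    nlinarith
  -- Bregman projections
  have hproj : ∀ k, ∃ q, (q ∈ C ∧ q ∈ interior L.dom) ∧
      ∀ w ∈ C ∩ L.dom, L.breg q (x k) ≤ L.breg w (x k) := by
    intro k
    obtain ⟨q, hq, hmin⟩ := L.proj_exists C hCcl hCcv ⟨z, hzC, hzint⟩ (x k) (hx k)
    refine ⟨q, ⟨hq.1, hq.2⟩, ?_⟩
    intro w hw
    have h1 := hmin w hw
    unfold LegendreFn.breg
    rw [inner_sub_left, inner_sub_left]
    linarith
  choose p hp hpmin using hproj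
  have hdist : ∀ k, L.distTo C (x k) = L.breg (p k) (x k) := by
    intro k
    apply IsLeast.csInf_eq
    constructor
    · exact ⟨p k, ⟨(hp k).1, interior_subset (hp k).2⟩, rfl⟩
    · rintro _ ⟨w, hw, rfl⟩
      exact hpmin k w hw
  have hbreg0 : Tendsto (fun k => L.breg (p k) (x k)) atTop (𝓝 0) := by
    have heq : (fun k => L.breg (p k) (x k)) = fun k => L.distTo C (x k) :=
      funext fun k => (hdist k).symm
    rw [heq]; exact hD
  -- the projections are bounded
  have hpB : ∀ k, ‖p k‖ ≤ (K2 + M₀ + (‖z‖ * R + L.f z)) / δ := by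
    intro k
    have h1 := hK2 (L.grad (x k)) (huS k) (p k) (interior_subset (hp k).2)
    have h2 := aux_breg_eq L (hx k) (p k)
    have h3 : L.breg (p k) (x k) ≤ M₀ := le_trans (hpmin k z ⟨hzC, hzdom⟩) (hMz k)
    have h4 := hconjlb k
    rw [le_div_iff₀ hδ]
    nlinarith
  have hxbdd : Bornology.IsBounded (range x) := by
    apply (Metric.isBounded_closedBall (x := (0:X)) (r := (K2 + ‖z‖ * R + L.f z) / δ)).subset
    rintro _ ⟨k, rfl⟩
    exact mem_closedBall_zero_iff.2 (hxB k)
  have hpbdd : Bornology.IsBounded (range p) := by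
    apply (Metric.isBounded_closedBall (x := (0:X))
      (r := (K2 + M₀ + (‖z‖ * R + L.f z)) / δ)).subset
    rintro _ ⟨k, rfl⟩
    exact mem_closedBall_zero_iff.2 (hpB k)
  have hSC1 : Tendsto (fun n => p n - x n) atTop (𝓝 0) :=
    hSC p x (fun n => (hp n).2) hx hpbdd hxbdd hbreg0
  -- the sequence x is Cauchy
  have hcauchy : CauchySeq x := by
    rw [Metric.cauchySeq_iff]
    by_contra hnc
    push_neg at hnc
    obtain ⟨ε₀, hε₀, hbad⟩ := hnc
    have key : ∀ N : ℕ, ∃ k j : ℕ, N ≤ k ∧ k ≤ j ∧ ε₀ ≤ dist (x j) (x k) := by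
      intro N
      obtain ⟨a, ha, b, hb, hab⟩ := hbad N
      rcases le_total a b with h | h
      · exact ⟨a, b, ha, h, by rw [dist_comm]; exact hab⟩
      · exact ⟨b, a, hb, h, hab⟩
    choose kk jj hkN hkj hdkj using key
    have hktop : Tendsto kk atTop atTop := tendsto_atTop_mono hkN tendsto_id
    have hZb : Bornology.IsBounded (range fun N => p (kk N)) := by
      apply hpbdd.subset
      rintro _ ⟨N, rfl⟩; exact mem_range_self _
    have hYb : Bornology.IsBounded (range fun N => x (jj N)) := by
      apply hxbdd.subset
      rintro _ ⟨N, rfl⟩; exact mem_range_self _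
    have hbregZY : Tendsto (fun N => L.breg (p (kk N)) (x (jj N))) atTop (𝓝 0) := by
      apply squeeze_zero (g := fun N => L.distTo C (x (kk N)))
      · intro N
        exact aux_breg_nonneg L (hx (jj N)) (interior_subset (hp (kk N)).2)
      · intro N
        calc L.breg (p (kk N)) (x (jj N)) ≤ L.breg (p (kk N)) (x (kk N)) :=
              hFej (p (kk N)) (hp (kk N)).1 (kk N) (jj N) (hkj N)
          _ = L.distTo C (x (kk N)) := (hdist (kk N)).symm
      · exact hD.comp hktop
    have hSC2 : Tendsto (fun N => p (kk N) - x (jj N)) atTop (𝓝 0) :=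
      hSC (fun N => p (kk N)) (fun N => x (jj N)) (fun N => (hp (kk N)).2)
        (fun N => hx (jj N)) hZb hYb hbregZY
    have hSC3 : Tendsto (fun N => p (kk N) - x (kk N)) atTop (𝓝 0) := hSC1.comp hktop
    have hdiff : Tendsto (fun N => x (kk N) - x (jj N)) atTop (𝓝 0) := by
      have heq : (fun N => x (kk N) - x (jj N)) =
          fun N => (p (kk N) - x (jj N)) - (p (kk N) - x (kk N)) := by
        funext N; abel
      rw [heq]
      simpa using hSC2.sub hSC3
    have hn0 : Tendsto (fun N => dist (x (jj N)) (x (kk N))) atTop (𝓝 0) := by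
      have h := hdiff.norm
      rw [norm_zero] at h
      exact h.congr fun N => ((dist_eq_norm _ _).trans (norm_sub_rev _ _)).symm
    obtain ⟨N, hN⟩ := (hn0.eventually (gt_mem_nhds hε₀)).exists
    exact absurd (hdkj N) (not_le.2 hN)
  obtain ⟨q, hq⟩ := cauchySeq_tendsto_of_complete hcauchy
  have hpq : Tendsto p atTop (𝓝 q) := by
    have h := hSC1.add hq
    simpa using h
  have hqC : q ∈ C := hCcl.mem_of_tendsto hpq (Eventually.of_forall fun k => (hp k).1)
  have hqint : q ∈ interior L.dom := by
    by_contra hqn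
    have hqcl : q ∈ closure L.dom :=
      mem_closure_of_tendsto hq (Eventually.of_forall fun k => interior_subset (hx k))
    have hblow := L.grad_blowup x q hx ⟨hqcl, hqn⟩ hq
    obtain ⟨k, hk⟩ := (hblow.eventually (eventually_gt_atTop R)).exists
    exact absurd (huR k) (not_le.2 hk)
  exact ⟨q, ⟨hqC, hqint⟩, hq⟩
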